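/- For positive semidefinite operators Ω₁, Ω₂ and M₀ on a finite-dimensional Hilbert space, tr(M₀Ω₁)·tr(M₀Ω₂) ≥ |tr(U√Ω₁ M₀ √Ω₂)|² for every unitary U. Consequently, tr(M₀Ω₁)·tr(M₀Ω₂) ≥ (tr|√Ω₁ M₀ √Ω₂|)². -/

import Mathlib

open Matrix ComplexOrder Kronecker BigOperators
open scoped InnerProductSpace

namespace Matrix.PosSemidef

/-- The positive semidefinite square root of a positive semidefinite matrix
(the definition removed from Mathlib, restored verbatim). -/
noncomputable def sqrt {n 𝕜 : Type*} [Fintype n] [RCLike 𝕜] [DecidableEq n]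
    {A : Matrix n n 𝕜} (hA : A.PosSemidef) : Matrix n n 𝕜 :=
  hA.1.eigenvectorUnitary.1 * diagonal ((↑) ∘ (√·) ∘ hA.1.eigenvalues) *
  (star hA.1.eigenvectorUnitary : Matrix n n 𝕜)

lemma posSemidef_sqrt {n 𝕜 : Type*} [Fintype n] [RCLike 𝕜] [DecidableEq n]
    {A : Matrix n n 𝕜} (hA : A.PosSemidef) : PosSemidef hA.sqrt := by
  unfold sqrt
  apply PosSemidef.mul_mul_conjTranspose_same
  refine posSemidef_diagonal_iff.mpr fun i ↦ ?_
  rw [Function.comp_apply, RCLike.nonneg_iff]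
  constructor
  · simp only [Function.comp_apply, RCLike.ofReal_re]
    exact Real.sqrt_nonneg _
  · simp only [Function.comp_apply, RCLike.ofReal_im]

lemma sqrt_mul_self {n 𝕜 : Type*} [Fintype n] [RCLike 𝕜] [DecidableEq n]
    {A : Matrix n n 𝕜} (hA : A.PosSemidef) : hA.sqrt * hA.sqrt = A := by
  let C : Matrix n n 𝕜 := hA.1.eigenvectorUnitary
  let E := diagonal ((↑) ∘ Real.sqrt ∘ hA.1.eigenvalues : n → 𝕜)
  suffices C * (E * (star C * C) * E) * star C = A by
    rw [Matrix.PosSemidef.sqrt]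
    simpa only [← mul_assoc] using this
  have : star C * C = 1 := by simp [C]
  rw [this, mul_one]
  have : E * E = diagonal ((↑) ∘ hA.1.eigenvalues) := by
    rw [diagonal_mul_diagonal]
    congr! with v
    simp [← pow_two, ← RCLike.ofReal_pow, Real.sq_sqrt (hA.eigenvalues_nonneg v)]
  rw [this]
  conv_rhs => rw [hA.1.spectral_theorem]
  rfl

end Matrix.PosSemidef

/-- Trace norm: tr|X| = tr √(Xᴴ X). -/
noncomputable def traceNorm {n : Type*} [Fintype n] [DecidableEq n] (X : Matrix n n ℂ) : ℝ :=
  ((Matrix.posSemidef_conjTranspose_mul_self X).sqrt).trace.re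

/-- A matrix, viewed as a Euclidean vector (so that the Euclidean inner product is the
Frobenius/Hilbert–Schmidt inner product). -/
noncomputable def matToEuc {n : Type*} [Fintype n] (A : Matrix n n ℂ) :
    EuclideanSpace ℂ (n × n) :=
  (WithLp.equiv 2 _).symm (fun p => A p.1 p.2)

lemma inner_matToEuc {n : Type*} [Fintype n] [DecidableEq n] (A B : Matrix n n ℂ) :
    ⟪matToEuc A, matToEuc B⟫_ℂ = (Aᴴ * B).trace := by
  simp only [PiLp.inner_apply, matToEuc, PiLp.toLp_apply, RCLike.inner_apply,
    Matrix.trace, Matrix.diag, Matrix.mul_apply, Matrix.conjTranspose_apply,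
    Fintype.sum_prod_type]
  rw [Finset.sum_comm]
  simp [RCLike.star_def, mul_comm]

/-- Cauchy–Schwarz for the Hilbert–Schmidt inner product. -/
lemma trace_cs {n : Type*} [Fintype n] [DecidableEq n] (A B : Matrix n n ℂ) :
    ‖(Aᴴ * B).trace‖ ^ 2 ≤ (Aᴴ * A).trace.re * (Bᴴ * B).trace.re := by
  have h := norm_inner_le_norm (𝕜 := ℂ) (matToEuc A) (matToEuc B)
  have h2 : ‖⟪matToEuc A, matToEuc B⟫_ℂ‖ ^ 2 ≤ ‖matToEuc A‖ ^ 2 * ‖matToEuc B‖ ^ 2 := by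
    rw [← mul_pow]
    exact pow_le_pow_left₀ (norm_nonneg _) h 2
  have hA : ‖matToEuc A‖ ^ 2 = (Aᴴ * A).trace.re := by
    rw [@norm_sq_eq_re_inner ℂ, inner_matToEuc]; rfl
  have hB : ‖matToEuc B‖ ^ 2 = (Bᴴ * B).trace.re := by
    rw [@norm_sq_eq_re_inner ℂ, inner_matToEuc]; rfl
  rw [inner_matToEuc] at h2
  rw [← hA, ← hB]
  exact h2

/-- Polar decomposition of a square complex matrix. -/
lemma exists_unitary_polar {d : ℕ} (X : Matrix (Fin d) (Fin d) ℂ) :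
    ∃ U ∈ Matrix.unitaryGroup (Fin d) ℂ,
      U * (Matrix.posSemidef_conjTranspose_mul_self X).sqrt = X := by
  classical
  set P := (Matrix.posSemidef_conjTranspose_mul_self X).sqrt with hPdef
  have hP2 : P * P = Xᴴ * X := (Matrix.posSemidef_conjTranspose_mul_self X).sqrt_mul_self
  have hPh : Pᴴ = P := ((Matrix.posSemidef_conjTranspose_mul_self X).posSemidef_sqrt).1
  set T : EuclideanSpace ℂ (Fin d) →ₗ[ℂ] EuclideanSpace ℂ (Fin d) := Matrix.toEuclideanLin X with hT
  set Q : EuclideanSpace ℂ (Fin d) →ₗ[ℂ] EuclideanSpace ℂ (Fin d) := Matrix.toEuclideanLin P with hQ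
  have hcomp : ∀ (A B : Matrix (Fin d) (Fin d) ℂ) (v : EuclideanSpace ℂ (Fin d)),
      Matrix.toEuclideanLin (A * B) v = Matrix.toEuclideanLin A (Matrix.toEuclideanLin B v) := by
    intro A B v
    simp [Matrix.toEuclideanLin_apply, Matrix.mulVec_mulVec]
  have hinner : ∀ v, ⟪Q v, Q v⟫_ℂ = ⟪T v, T v⟫_ℂ := by
    intro v
    have key : ∀ (M : Matrix (Fin d) (Fin d) ℂ) (v : EuclideanSpace ℂ (Fin d)),
        ⟪Matrix.toEuclideanLin M v, Matrix.toEuclideanLin M v⟫_ℂ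
          = ⟪v, Matrix.toEuclideanLin (Mᴴ * M) v⟫_ℂ := by
      intro M v
      rw [hcomp, Matrix.toEuclideanLin_conjTranspose_eq_adjoint, LinearMap.adjoint_inner_right]
    have h1 := key P v
    have h2 := key X v
    rw [hPh, hP2] at h1
    rw [h1, h2]
  have hnorm : ∀ v, ‖Q v‖ = ‖T v‖ := by
    intro v
    rw [@norm_eq_sqrt_re_inner ℂ, @norm_eq_sqrt_re_inner ℂ, hinner]
  have hker : LinearMap.ker Q ≤ LinearMap.ker T := by
    intro v hv
    rw [LinearMap.mem_ker] at hv ⊢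
    have := hnorm v
    rw [hv, norm_zero] at this
    exact norm_eq_zero.mp this.symm
  set e := Q.quotKerEquivRange with he
  set Tbar := (LinearMap.ker Q).liftQ T hker with hTbar
  set L0 : ↥(LinearMap.range Q) →ₗ[ℂ] EuclideanSpace ℂ (Fin d) :=
    Tbar ∘ₗ (e.symm : ↥(LinearMap.range Q) →ₗ[ℂ] _) with hL0
  have hL0norm : ∀ u : ↥(LinearMap.range Q), ‖L0 u‖ = ‖u‖ := by
    intro u
    obtain ⟨w, rfl⟩ := e.surjective u
    obtain ⟨v, rfl⟩ := Submodule.Quotient.mk_surjective _ w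
    have h1 : L0 (e (Submodule.Quotient.mk v)) = T v := by
      simp [hL0, hTbar, Submodule.liftQ_apply]
    have h2 : ((e (Submodule.Quotient.mk v) : ↥(LinearMap.range Q)) : EuclideanSpace ℂ (Fin d))
        = Q v := Q.quotKerEquivRange_apply_mk v
    rw [h1, ← Submodule.norm_coe, h2, hnorm]
  set L : ↥(LinearMap.range Q) →ₗᵢ[ℂ] EuclideanSpace ℂ (Fin d) := ⟨L0, hL0norm⟩ with hL
  set V := L.extend with hV
  have hVQ : ∀ v, V (Q v) = T v := by
    intro v
    have hmem : Q v ∈ LinearMap.range Q := LinearMap.mem_range_self _ v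
    have h0 : V (Q v) = L ⟨Q v, hmem⟩ := L.extend_apply ⟨Q v, hmem⟩
    have h2 : e (Submodule.Quotient.mk v) = (⟨Q v, hmem⟩ : ↥(LinearMap.range Q)) :=
      Subtype.ext (Q.quotKerEquivRange_apply_mk v)
    have h3 : e.symm ⟨Q v, hmem⟩ = Submodule.Quotient.mk v := by
      rw [← h2, LinearEquiv.symm_apply_apply]
    rw [h0]
    show L0 ⟨Q v, hmem⟩ = T v
    rw [hL0]
    simp only [LinearMap.coe_comp, Function.comp_apply, LinearEquiv.coe_coe, h3]
    simp [hTbar]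
  have hVsurj : Function.Surjective V := by
    have := V.injective
    exact (LinearMap.injective_iff_surjective (f := V.toLinearMap)).mp this
  set W := LinearIsometryEquiv.ofSurjective V hVsurj with hW
  have hWV : ∀ x, W x = V x := by intro x; rfl
  set b := EuclideanSpace.basisFun (Fin d) ℂ with hb
  set c := b.map W with hc
  set U := b.toBasis.toMatrix ⇑c with hU
  refine ⟨U, b.toMatrix_orthonormalBasis_mem_unitary c, ?_⟩
  have hUW : U = LinearMap.toMatrix b.toBasis b.toBasis (W : EuclideanSpace ℂ (Fin d) →ₗ[ℂ] _) := by
    ext i j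
    rw [hU, Module.Basis.toMatrix_apply, LinearMap.toMatrix_apply]
    simp [hc]
  have hUlin : Matrix.toEuclideanLin U = (W : EuclideanSpace ℂ (Fin d) →ₗ[ℂ] _) := by
    rw [Matrix.toEuclideanLin_eq_toLin_orthonormal, hUW, Matrix.toLin_toMatrix]
  apply Matrix.toEuclideanLin.injective
  ext v : 1
  rw [hcomp U P v, hUlin]
  show W (Q v) = T v
  rw [hWV, hVQ]

lemma psd_trace_nonneg {d : ℕ} (A : Matrix (Fin d) (Fin d) ℂ) (h : A.PosSemidef) :
    0 ≤ A.trace := by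
  have hdiag : ∀ i, 0 ≤ A i i := fun i => by
    exact h.diag_nonneg
  rw [Matrix.trace]
  exact Finset.sum_nonneg fun i _ => hdiag i

lemma norm_of_nonneg' (z : ℂ) (h : 0 ≤ z) : ‖z‖ = z.re := by
  obtain ⟨hre, him⟩ := Complex.nonneg_iff.mp h
  have : z = (z.re : ℂ) := Complex.ext rfl (by simp [← him])
  rw [this]
  simpa using abs_of_nonneg hre

theorem stmt5 {d : ℕ} (Ω₁ Ω₂ M₀ : Matrix (Fin d) (Fin d) ℂ)
    (hΩ₁ : Ω₁.PosSemidef) (hΩ₂ : Ω₂.PosSemidef) (hM₀ : M₀.PosSemidef) :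
    (∀ U ∈ Matrix.unitaryGroup (Fin d) ℂ,
        ((M₀ * Ω₁).trace).re * ((M₀ * Ω₂).trace).re ≥
          ‖(U * (hΩ₁.sqrt * M₀ * hΩ₂.sqrt)).trace‖ ^ 2) ∧
      ((M₀ * Ω₁).trace).re * ((M₀ * Ω₂).trace).re ≥
        traceNorm (hΩ₁.sqrt * M₀ * hΩ₂.sqrt) ^ 2 := by
  have hS₁ : hΩ₁.sqrtᴴ = hΩ₁.sqrt := hΩ₁.posSemidef_sqrt.1
  have hS₂ : hΩ₂.sqrtᴴ = hΩ₂.sqrt := hΩ₂.posSemidef_sqrt.1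
  have hN : hM₀.sqrtᴴ = hM₀.sqrt := hM₀.posSemidef_sqrt.1
  have hNN : ∀ C : Matrix (Fin d) (Fin d) ℂ, hM₀.sqrt * (hM₀.sqrt * C) = M₀ * C := fun C => by
    rw [← Matrix.mul_assoc, hM₀.sqrt_mul_self]
  have h1 : ∀ U ∈ Matrix.unitaryGroup (Fin d) ℂ,
      ((M₀ * Ω₁).trace).re * ((M₀ * Ω₂).trace).re ≥
        ‖(U * (hΩ₁.sqrt * M₀ * hΩ₂.sqrt)).trace‖ ^ 2 := by
    intro U hU
    have hUU : Uᴴ * U = 1 := by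
      have := (Matrix.mem_unitaryGroup_iff'.mp hU)
      simpa [Matrix.star_eq_conjTranspose] using this
    have hUx : ∀ x : Matrix (Fin d) (Fin d) ℂ, Uᴴ * (U * x) = x := fun x => by
      rw [← Matrix.mul_assoc, hUU, Matrix.one_mul]
    set A := hM₀.sqrt * hΩ₁.sqrt * Uᴴ with hA
    set B := hM₀.sqrt * hΩ₂.sqrt with hB
    have hAh : Aᴴ = U * (hΩ₁.sqrt * hM₀.sqrt) := by
      simp [hA, Matrix.conjTranspose_mul, hN, hS₁, Matrix.mul_assoc]
    have hBh : Bᴴ = hΩ₂.sqrt * hM₀.sqrt := by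
      simp [hB, Matrix.conjTranspose_mul, hN, hS₂]
    have hAB : (Aᴴ * B).trace = (U * (hΩ₁.sqrt * M₀ * hΩ₂.sqrt)).trace := by
      rw [hAh, hB]
      simp only [Matrix.mul_assoc, hNN]
    have e1 : (Aᴴ * A).trace = (M₀ * Ω₁).trace := by
      rw [hAh, hA]
      calc (U * (hΩ₁.sqrt * hM₀.sqrt) * (hM₀.sqrt * hΩ₁.sqrt * Uᴴ)).trace
          = ((hM₀.sqrt * hΩ₁.sqrt * Uᴴ) * (U * (hΩ₁.sqrt * hM₀.sqrt))).trace :=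
            Matrix.trace_mul_comm _ _
        _ = (hM₀.sqrt * (hΩ₁.sqrt * (hΩ₁.sqrt * hM₀.sqrt))).trace := by
            simp only [Matrix.mul_assoc, hUx]
        _ = ((hΩ₁.sqrt * (hΩ₁.sqrt * hM₀.sqrt)) * hM₀.sqrt).trace :=
            Matrix.trace_mul_comm _ _
        _ = (M₀ * Ω₁).trace := by
            simp only [Matrix.mul_assoc]
            rw [hM₀.sqrt_mul_self, ← Matrix.mul_assoc, Matrix.trace_mul_comm,
              hΩ₁.sqrt_mul_self]
    have e2 : (Bᴴ * B).trace = (M₀ * Ω₂).trace := by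
      rw [hBh, hB]
      calc ((hΩ₂.sqrt * hM₀.sqrt) * (hM₀.sqrt * hΩ₂.sqrt)).trace
          = (hΩ₂.sqrt * (M₀ * hΩ₂.sqrt)).trace := by
            simp only [Matrix.mul_assoc, hNN]
        _ = ((M₀ * hΩ₂.sqrt) * hΩ₂.sqrt).trace := Matrix.trace_mul_comm _ _
        _ = (M₀ * Ω₂).trace := by
            rw [Matrix.mul_assoc, hΩ₂.sqrt_mul_self]
    have := trace_cs A B
    rw [hAB, e1, e2] at this
    exact this
  refine ⟨h1, ?_⟩
  obtain ⟨U, hUmem, hpol⟩ := exists_unitary_polar (hΩ₁.sqrt * M₀ * hΩ₂.sqrt)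
  set P := (Matrix.posSemidef_conjTranspose_mul_self (hΩ₁.sqrt * M₀ * hΩ₂.sqrt)).sqrt with hP
  have hstar : star U * U = 1 := (Unitary.mem_iff.mp hUmem).1
  have hVmem : star U ∈ Matrix.unitaryGroup (Fin d) ℂ := Unitary.star_mem hUmem
  have hVX : star U * (hΩ₁.sqrt * M₀ * hΩ₂.sqrt) = P := by
    rw [← hpol, ← Matrix.mul_assoc, hstar, Matrix.one_mul]
  have key := h1 (star U) hVmem
  rw [hVX] at key
  have hPtr : ‖P.trace‖ = traceNorm (hΩ₁.sqrt * M₀ * hΩ₂.sqrt) := by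
    rw [norm_of_nonneg' _ (psd_trace_nonneg P
      (Matrix.posSemidef_conjTranspose_mul_self (hΩ₁.sqrt * M₀ * hΩ₂.sqrt)).posSemidef_sqrt)]
    rfl
  rwa [hPtr] at key
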